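/- For every real number q, the set B_q = {M ∈ co(2,1) : M·e₁ = −q·((trace M)/3)·e₁} is a 2-dimensional Lie subalgebra of the 3×3 real matrices with commutator bracket, consisting exactly of the matrices !![−qp, b, 0; 0, p, b; 0, 0, (q+2)p] with p, b ∈ ℝ; B_q is abelian if and only if q = −1. -/

import Mathlib

open Matrix

attribute [local instance] LieRing.ofAssociativeRing

/-- Gram matrix of the Lorentzian quadratic form `Q(v) = v₂² − 2 v₁ v₃` of signature `(2,1)`. -/
noncomputable def Gmat : Matrix (Fin 3) (Fin 3) ℝ := !![0,0,-1; 0,1,0; -1,0,0]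

/-- The conformal Lorentz algebra `co(2,1)`. -/
noncomputable def co21 : Set (Matrix (Fin 3) (Fin 3) ℝ) :=
  {M | ∃ l : ℝ, Mᵀ * Gmat + Gmat * M = l • Gmat}

/-- The first standard basis vector `e₁ = (1,0,0)` of `ℝ³`, which is null for `Q`. -/
noncomputable def e1 : Fin 3 → ℝ := ![1, 0, 0]

/-- The subalgebra `B_q = {M ∈ co(2,1) : M·e₁ = −q·((trace M)/3)·e₁}`. -/
noncomputable def typeB (q : ℝ) : Set (Matrix (Fin 3) (Fin 3) ℝ) :=
  {M ∈ co21 | M *ᵥ e1 = (-q * (M.trace / 3)) • e1}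


noncomputable def Bmat (q p b : ℝ) : Matrix (Fin 3) (Fin 3) ℝ :=
  !![-q*p, b, 0; 0, p, b; 0, 0, (q+2)*p]

lemma setEq (q : ℝ) : typeB q = {M | ∃ p b : ℝ, M = Bmat q p b} := by
  ext M
  constructor
  · rintro ⟨⟨l, hl⟩, he⟩
    have h20 : M 2 0 = 0 := by
      have h := congrFun (congrFun hl 0) 0
      simp [Gmat, Matrix.mul_apply, Matrix.vecMul, dotProduct, Fin.sum_univ_three, Matrix.vecHead, Matrix.vecTail] at h
      linarith
    have h02 : M 0 2 = 0 := by
      have h := congrFun (congrFun hl 2) 2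
      simp [Gmat, Matrix.mul_apply, Matrix.vecMul, dotProduct, Fin.sum_univ_three, Matrix.vecHead, Matrix.vecTail] at h
      linarith
    have h21 : M 1 0 = M 2 1 := by
      have h := congrFun (congrFun hl 0) 1
      simp [Gmat, Matrix.mul_apply, Matrix.vecMul, dotProduct, Fin.sum_univ_three, Matrix.vecHead, Matrix.vecTail] at h
      linarith
    have h12 : M 1 2 = M 0 1 := by
      have h := congrFun (congrFun hl 1) 2
      simp [Gmat, Matrix.mul_apply, Matrix.vecMul, dotProduct, Fin.sum_univ_three, Matrix.vecHead, Matrix.vecTail] at h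
      linarith
    have h11 : 2 * M 1 1 = l := by
      have h := congrFun (congrFun hl 1) 1
      simp [Gmat, Matrix.mul_apply, Matrix.vecMul, dotProduct, Fin.sum_univ_three, Matrix.vecHead, Matrix.vecTail] at h
      linarith
    have hsum : M 0 0 + M 2 2 = l := by
      have h := congrFun (congrFun hl 0) 2
      simp [Gmat, Matrix.mul_apply, Matrix.vecMul, dotProduct, Fin.sum_univ_three, Matrix.vecHead, Matrix.vecTail] at h
      linarith
    have htr : M.trace = M 0 0 + M 1 1 + M 2 2 := by
      simp [Matrix.trace, Fin.sum_univ_three, Matrix.diag]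
    have h00 : M 0 0 = -q * (M.trace / 3) := by
      have h := congrFun he 0
      simpa [Matrix.mulVec, e1, dotProduct, Fin.sum_univ_three, Matrix.vecHead, Matrix.vecTail] using h
    have h10 : M 1 0 = 0 := by
      have h := congrFun he 1
      simpa [Matrix.mulVec, e1, dotProduct, Fin.sum_univ_three, Matrix.vecHead, Matrix.vecTail] using h
    have htr3 : M.trace = 3 * M 1 1 := by rw [htr]; linarith
    have h00' : M 0 0 = -q * M 1 1 := by rw [h00, htr3]; ring
    refine ⟨M 1 1, M 0 1, ?_⟩
    ext i j
    fin_cases i <;> fin_cases j <;>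
      simp [Bmat, Matrix.vecHead, Matrix.vecTail] <;> linarith
  · rintro ⟨p, b, rfl⟩
    refine ⟨⟨2 * p, ?_⟩, ?_⟩
    · ext i j
      fin_cases i <;> fin_cases j <;>
        simp [Bmat, Gmat, Matrix.mul_apply, Matrix.vecMul, dotProduct,
          Fin.sum_univ_three, Matrix.vecHead, Matrix.vecTail] <;> ring
    · have htr : (Bmat q p b).trace = 3 * p := by
        simp [Bmat, Matrix.trace, Fin.sum_univ_three, Matrix.diag]; ring
      have hc : -q * ((Bmat q p b).trace / 3) = -q * p := by rw [htr]; ring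
      rw [hc]
      funext i
      fin_cases i <;>
        simp [Bmat, e1, Matrix.vecHead, Matrix.vecTail, Matrix.mulVec, dotProduct, Fin.sum_univ_three]

noncomputable def Lq (q : ℝ) : LieSubalgebra ℝ (Matrix (Fin 3) (Fin 3) ℝ) where
  carrier := {M | ∃ p b : ℝ, M = Bmat q p b}
  add_mem' := by
    rintro x y ⟨p, b, rfl⟩ ⟨p', b', rfl⟩
    exact ⟨p + p', b + b', by
      ext i j
      fin_cases i <;> fin_cases j <;>
        simp [Bmat, Matrix.vecHead, Matrix.vecTail] <;> ring⟩
  zero_mem' := ⟨0, 0, by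
    ext i j
    fin_cases i <;> fin_cases j <;> simp [Bmat, Matrix.vecHead, Matrix.vecTail]⟩
  smul_mem' := by
    rintro c x ⟨p, b, rfl⟩
    exact ⟨c * p, c * b, by
      ext i j
      fin_cases i <;> fin_cases j <;>
        simp [Bmat, Matrix.vecHead, Matrix.vecTail] <;> ring⟩
  lie_mem' := by
    rintro x y ⟨p, b, rfl⟩ ⟨p', b', rfl⟩
    exact ⟨0, -(q+1) * (p * b' - p' * b), by
      ext i j
      fin_cases i <;> fin_cases j <;>
        simp [Ring.lie_def, Bmat, Matrix.mul_apply, Matrix.sub_apply,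
          Fin.sum_univ_three, Matrix.vecHead, Matrix.vecTail] <;> ring⟩

noncomputable def fq (q : ℝ) : (ℝ × ℝ) →ₗ[ℝ] Matrix (Fin 3) (Fin 3) ℝ where
  toFun x := Bmat q x.1 x.2
  map_add' x y := by
    ext i j
    fin_cases i <;> fin_cases j <;>
      simp [Bmat, Matrix.vecHead, Matrix.vecTail] <;> ring
  map_smul' c x := by
    ext i j
    fin_cases i <;> fin_cases j <;>
      simp [Bmat, Matrix.vecHead, Matrix.vecTail] <;> ring

lemma fq_inj (q : ℝ) : Function.Injective (fq q) := by
  intro x y h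
  have h1 := congrFun (congrFun h 1) 1
  have h2 := congrFun (congrFun h 0) 1
  simp [fq, Bmat, Matrix.vecHead, Matrix.vecTail] at h1 h2
  exact Prod.ext h1 h2

lemma fq_range (q : ℝ) : LinearMap.range (fq q) = (Lq q).toSubmodule := by
  ext M
  simp only [LinearMap.mem_range]
  constructor
  · rintro ⟨⟨p, b⟩, rfl⟩; exact ⟨p, b, rfl⟩
  · rintro ⟨p, b, rfl⟩; exact ⟨(p, b), rfl⟩

lemma Lq_rank (q : ℝ) : Module.finrank ℝ (Lq q) = 2 := by
  have : Module.finrank ℝ (Lq q) = Module.finrank ℝ (LinearMap.range (fq q)) := by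
    rw [fq_range]; rfl
  rw [this, LinearMap.finrank_range_of_inj (fq_inj q)]
  simp

lemma Lq_abelian (q : ℝ) : IsLieAbelian (Lq q) ↔ q = -1 := by
  constructor
  · intro h
    have hA : Bmat q 1 0 ∈ Lq q := ⟨1, 0, rfl⟩
    have hB : Bmat q 0 1 ∈ Lq q := ⟨0, 1, rfl⟩
    have h0 : ⁅(⟨_, hA⟩ : Lq q), (⟨_, hB⟩ : Lq q)⁆ = 0 := h.trivial _ _
    have h0' : (⁅Bmat q 1 0, Bmat q 0 1⁆ : Matrix (Fin 3) (Fin 3) ℝ) = 0 := by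
      have := congrArg Subtype.val h0
      simpa only [LieSubalgebra.coe_bracket, ZeroMemClass.coe_zero] using this
    have h1 := congrFun (congrFun h0' 0) 1
    simp [Ring.lie_def, Bmat, Matrix.mul_apply, Matrix.sub_apply,
      Fin.sum_univ_three, Matrix.vecHead, Matrix.vecTail] at h1
    linarith
  · intro hq
    subst hq
    constructor
    rintro ⟨x, p, b, rfl⟩ ⟨y, p', b', rfl⟩
    apply Subtype.ext
    show ⁅Bmat (-1) p b, Bmat (-1) p' b'⁆ = 0
    ext i j
    fin_cases i <;> fin_cases j <;>
      simp [Ring.lie_def, Bmat, Matrix.mul_apply, Matrix.sub_apply,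
        Fin.sum_univ_three, Matrix.vecHead, Matrix.vecTail, Matrix.zero_apply] <;> ring

theorem stmt4 (q : ℝ) :
    (typeB q = {M | ∃ p b : ℝ, M = !![-q*p, b, 0; 0, p, b; 0, 0, (q+2)*p]}) ∧
    (∃ L : LieSubalgebra ℝ (Matrix (Fin 3) (Fin 3) ℝ),
      (L : Set (Matrix (Fin 3) (Fin 3) ℝ)) = typeB q ∧
      Module.finrank ℝ L = 2 ∧
      (IsLieAbelian L ↔ q = -1)) := by
  refine ⟨setEq q, Lq q, ?_, Lq_rank q, Lq_abelian q⟩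
  rw [setEq q]
  rfl
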